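/- Let H and H' be subgroups of Z_n × Z_n with |H| = |H'| = n and Z_n × Z_n = H ⊕ H'. Then for every generator h of H (assuming H is cyclic of order n generated by h), there exists h' ∈ H' such that ⟨h,h'⟩ = h₁h'₂ - h₂h'₁ = 1 in Z_n. -/

import Mathlib

open Complex
open scoped Classical

/-- The character value `e^{2πi t/n}` for `t : ZMod n`. -/
noncomputable def charVal (n : ℕ) (t : ZMod n) : ℂ :=
  Complex.exp (2 * Real.pi * Complex.I * (t.val : ℂ) / (n : ℂ))

/-- The symplectic form `⟨x,y⟩ = x₁y₂ - x₂y₁` on `ZMod n × ZMod n`. -/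
def sympForm {n : ℕ} (x y : ZMod n × ZMod n) : ZMod n :=
  x.1 * y.2 - x.2 * y.1

/-- Symplectic Fourier transform of the indicator of `A`. -/
noncomputable def symFT {n : ℕ} (A : Set (ZMod n × ZMod n)) (ξ : ZMod n × ZMod n) : ℂ :=
  ∑ᶠ a ∈ A, charVal n (sympForm a ξ)

/-- Euclidean Fourier transform of the indicator of `A`. -/
noncomputable def euclFT {n : ℕ} (A : Set (ZMod n × ZMod n)) (ξ : ZMod n × ZMod n) : ℂ :=
  ∑ᶠ a ∈ A, charVal n (a.1 * ξ.1 + a.2 * ξ.2)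

/-- Difference set `ΔA = {a - a' : a,a' ∈ A, a ≠ a'}`. -/
def diffSet {G : Type*} [AddGroup G] (A : Set G) : Set G :=
  {d | ∃ a ∈ A, ∃ a' ∈ A, a ≠ a' ∧ d = a - a'}

/-- `A ⊕ B = G`: every element of `G` is uniquely a sum `a + b` with `a ∈ A`, `b ∈ B`. -/
def IsTilingPair {G : Type*} [AddCommGroup G] (A B : Set G) : Prop :=
  ∀ g : G, ∃! p : G × G, p.1 ∈ A ∧ p.2 ∈ B ∧ p.1 + p.2 = g

/-- Symplectic orthogonal set `H^{⊥s}`. -/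
def sympPerp {n : ℕ} (H : Set (ZMod n × ZMod n)) : Set (ZMod n × ZMod n) :=
  {g | ∀ h ∈ H, sympForm g h = 0}

/-- `(A,S)` is a symplectic spectral pair: `|A| = |S|` and `ΔS ⊆ Z(1̂_A^{sym})`. -/
def IsSympSpectralPair {n : ℕ} (A S : Set (ZMod n × ZMod n)) : Prop :=
  Nat.card A = Nat.card S ∧ ∀ s ∈ S, ∀ s' ∈ S, s ≠ s' → symFT A (s - s') = 0

theorem exists_symplectic_partner (n : ℕ) (hn : 0 < n)
    (H H' : AddSubgroup (ZMod n × ZMod n))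
    (hH : Nat.card H = n) (hH' : Nat.card H' = n)
    (hsum : ∀ g : ZMod n × ZMod n, ∃! p : H × H', (p.1 : ZMod n × ZMod n) + (p.2 : ZMod n × ZMod n) = g)
    (h : ZMod n × ZMod n) (hgen : AddSubgroup.zmultiples h = H) :
    ∃ h' ∈ H', sympForm h h' = 1 := by
  classical
  have hord : addOrderOf h = n := by
    rw [← Nat.card_zmultiples h, hgen, hH]
  have hNeZero : NeZero n := ⟨hn.ne'⟩
  -- the homomorphism g ↦ ⟨h, g⟩
  let f : (ZMod n × ZMod n) →+ ZMod n :=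
    { toFun := fun g => h.1 * g.2 - h.2 * g.1
      map_zero' := by simp
      map_add' := by
        intro x y
        simp only [Prod.fst_add, Prod.snd_add]
        ring }
  have ha : h.1 ∈ f.range := ⟨(0, 1), by simp [f]⟩
  have hb : h.2 ∈ f.range := ⟨(-1, 0), by simp [f]⟩
  set k := Nat.card f.range with hk
  have hkzero : ∀ x ∈ f.range, k • x = 0 := by
    intro x hx
    have h0 := card_nsmul_eq_zero' (G := f.range) (x := ⟨x, hx⟩)
    have h1 := congrArg (AddSubgroup.subtype f.range) h0
    rw [hk]
    simpa only [map_nsmul, map_zero, AddSubgroup.subtype_apply] using h1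
  have hkh : k • h = 0 := by
    have h1 := hkzero h.1 ha
    have h2 := hkzero h.2 hb
    ext
    · simpa [nsmul_eq_mul] using h1
    · simpa [nsmul_eq_mul] using h2
  have hndvd : n ∣ k := by
    rw [← hord]
    exact addOrderOf_dvd_of_nsmul_eq_zero hkh
  have hkdvd : k ∣ n := by
    have h2 := AddSubgroup.card_addSubgroup_dvd_card f.range
    rwa [Nat.card_zmod, ← hk] at h2
  have hkn : k = n := Nat.dvd_antisymm hkdvd hndvd
  have htop : f.range = ⊤ := by
    apply AddSubgroup.eq_top_of_card_eq
    rw [← hk, hkn, Nat.card_zmod]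
  have h1mem : (1 : ZMod n) ∈ f.range := htop ▸ AddSubgroup.mem_top 1
  obtain ⟨g, hg⟩ := h1mem
  obtain ⟨⟨p, p'⟩, hpp', -⟩ := hsum g
  refine ⟨p', p'.2, ?_⟩
  -- p ∈ H = zmultiples h, so sympForm h p = 0
  have hpH : (p : ZMod n × ZMod n) ∈ AddSubgroup.zmultiples h := by
    rw [hgen]; exact p.2
  obtain ⟨m, hm⟩ := hpH
  have hfp : f (p : ZMod n × ZMod n) = 0 := by
    rw [← hm]
    have : f (m • h) = m • f h := map_zsmul f m h
    rw [this]
    have : f h = 0 := by simp [f]; ring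
    simp [this]
  have : f ((p : ZMod n × ZMod n) + (p' : ZMod n × ZMod n)) = 1 := by rw [hpp']; exact hg
  rw [map_add, hfp, zero_add] at this
  simpa [sympForm, f] using this
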